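/- Let (Ω, 𝓕, P) be a probability space, let S₀ < S₁ be real numbers, and let g : [S₀, S₁] × Ω → ℝ be jointly measurable and bounded. Suppose there are constants M, κ > 0 such that for all r₁, r₂, r₃, r₄ with S₀ ≤ r₁ ≤ r₂ ≤ r₃ ≤ r₄ ≤ S₁, |E[g(r₁,·)·g(r₂,·)·g(r₃,·)·g(r₄,·)]| ≤ M·e^{−κ(r₂−r₁)}·e^{−κ(r₄−r₃)}. Then E[ ( ∫_{S₀}^{S₁} g(u,·) du )⁴ ] ≤ 24·M·κ^{−2}·(S₁ − S₀)². -/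

import Mathlib

open MeasureTheory intervalIntegral

lemma aux_hasDeriv (c a : ℝ) (hc : c ≠ 0) (b : ℝ) :
    HasDerivAt (fun x => Real.exp (c*(x-a))/c) (Real.exp (c*(b-a))) b := by
  have h1 : HasDerivAt (fun x : ℝ => c*(x-a)) c b := by
    simpa using ((hasDerivAt_id b).sub_const a).const_mul c
  have h2 := (Real.hasDerivAt_exp (c*(b-a))).comp b h1
  have h3 := h2.div_const c
  rw [mul_div_cancel_right₀ _ hc] at h3
  exact h3

lemma aux_exp_integral (κ S₀ S₁ a : ℝ) (hκ : 0 < κ) (ha : a ∈ Set.Ioc S₀ S₁) :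
    ∫ b in Set.Ioc S₀ S₁, Real.exp (-κ * |a - b|) ≤ 2/κ := by
  have hS : S₀ ≤ S₁ := le_trans ha.1.le ha.2
  have hcont : Continuous fun b : ℝ => Real.exp (-κ * |a - b|) := by fun_prop
  rw [← intervalIntegral.integral_of_le hS]
  rw [← intervalIntegral.integral_add_adjacent_intervals (b := a)
        (hcont.intervalIntegrable _ _) (hcont.intervalIntegrable _ _)]
  have e1 : ∫ b in S₀..a, Real.exp (-κ * |a - b|) = ∫ b in S₀..a, Real.exp (κ*(b-a)) := by
    apply intervalIntegral.integral_congr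
    intro b hb
    rw [Set.uIcc_of_le ha.1.le] at hb
    show Real.exp (-κ * |a - b|) = _
    rw [abs_of_nonneg (sub_nonneg.2 hb.2)]
    congr 1; ring
  have e2 : ∫ b in a..S₁, Real.exp (-κ * |a - b|) = ∫ b in a..S₁, Real.exp ((-κ)*(b-a)) := by
    apply intervalIntegral.integral_congr
    intro b hb
    rw [Set.uIcc_of_le ha.2] at hb
    show Real.exp (-κ * |a - b|) = _
    rw [abs_of_nonpos (sub_nonpos.2 hb.1)]
    congr 1; ring
  have i1 : ∫ b in S₀..a, Real.exp (κ*(b-a)) = Real.exp (κ*(a-a))/κ - Real.exp (κ*(S₀-a))/κ :=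
    intervalIntegral.integral_eq_sub_of_hasDerivAt
      (fun b _ => aux_hasDeriv κ a hκ.ne' b)
      ((Real.continuous_exp.comp (by fun_prop)).intervalIntegrable _ _)
  have i2 : ∫ b in a..S₁, Real.exp ((-κ)*(b-a))
      = Real.exp ((-κ)*(S₁-a))/(-κ) - Real.exp ((-κ)*(a-a))/(-κ) :=
    intervalIntegral.integral_eq_sub_of_hasDerivAt
      (fun b _ => aux_hasDeriv (-κ) a (neg_ne_zero.2 hκ.ne') b)
      ((Real.continuous_exp.comp (by fun_prop)).intervalIntegrable _ _)
  rw [e1, e2, i1, i2]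
  have p1 : 0 < Real.exp (κ*(S₀-a)) := Real.exp_pos _
  have p2 : 0 < Real.exp ((-κ)*(S₁-a)) := Real.exp_pos _
  simp only [sub_self, mul_zero, Real.exp_zero]
  rw [div_neg, div_neg]
  have q1 : 0 ≤ Real.exp (κ*(S₀-a))/κ := div_nonneg p1.le hκ.le
  have q2 : 0 ≤ Real.exp ((-κ)*(S₁-a))/κ := div_nonneg p2.le hκ.le
  have : (2:ℝ)/κ = 1/κ + 1/κ := by ring
  linarith


noncomputable def Bk (κ a b : ℝ) : ℝ := Real.exp (-κ * |a - b|)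

lemma Bk_pos (κ a b : ℝ) : 0 < Bk κ a b := Real.exp_pos _

lemma Bk_symm (κ a b : ℝ) : Bk κ a b = Bk κ b a := by rw [Bk, Bk, abs_sub_comm]

lemma Bk_le_one (κ a b : ℝ) (hκ : 0 ≤ κ) : Bk κ a b ≤ 1 := by
  have h : -κ * |a - b| ≤ 0 := by
    have := abs_nonneg (a - b)
    nlinarith
  calc Bk κ a b ≤ Real.exp 0 := Real.exp_le_exp.2 h
    _ = 1 := Real.exp_zero

lemma Bk_of_le (κ a b : ℝ) (h : a ≤ b) : Bk κ a b = Real.exp (-κ * (b - a)) := by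
  rw [Bk, abs_sub_comm, abs_of_nonneg (sub_nonneg.2 h)]

lemma aux_key {Ω : Type*} [MeasurableSpace Ω] (P : Measure Ω) [IsProbabilityMeasure P]
    (S₀ S₁ : ℝ) (g' : ℝ → Ω → ℝ) (M κ : ℝ) (hM : 0 < M)
    (hzero : ∀ u, u ∉ Set.Icc S₀ S₁ → ∀ ω, g' u ω = 0)
    (hcorr' : ∀ r₁ r₂ r₃ r₄ : ℝ, S₀ ≤ r₁ → r₁ ≤ r₂ → r₂ ≤ r₃ → r₃ ≤ r₄ → r₄ ≤ S₁ →
      |∫ ω, g' r₁ ω * g' r₂ ω * g' r₃ ω * g' r₄ ω ∂P|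
        ≤ M * Real.exp (-κ * (r₂ - r₁)) * Real.exp (-κ * (r₄ - r₃))) :
    ∀ u₁ u₂ u₃ u₄ : ℝ,
      |∫ ω, g' u₁ ω * g' u₂ ω * g' u₃ ω * g' u₄ ω ∂P|
        ≤ M * (Bk κ u₁ u₂ * Bk κ u₃ u₄ + Bk κ u₁ u₃ * Bk κ u₂ u₄ + Bk κ u₁ u₄ * Bk κ u₂ u₃) := by
  -- positivity of the RHS without the |·| term
  have hRHS : ∀ a b c d : ℝ,
      0 ≤ M * (Bk κ a b * Bk κ c d + Bk κ a c * Bk κ b d + Bk κ a d * Bk κ b c) := by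
    intro a b c d
    have m1 := mul_pos hM (mul_pos (Bk_pos κ a b) (Bk_pos κ c d))
    have m2 := mul_pos hM (mul_pos (Bk_pos κ a c) (Bk_pos κ b d))
    have m3 := mul_pos hM (mul_pos (Bk_pos κ a d) (Bk_pos κ b c))
    nlinarith
  -- sorted case
  have S4 : ∀ a b c d : ℝ, a ∈ Set.Icc S₀ S₁ → d ∈ Set.Icc S₀ S₁ →
      a ≤ b → b ≤ c → c ≤ d →
      |∫ ω, g' a ω * g' b ω * g' c ω * g' d ω ∂P| ≤ M * (Bk κ a b * Bk κ c d) := by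
    intro a b c d ha hd hab hbc hcd
    have h := hcorr' a b c d ha.1 hab hbc hcd hd.2
    rw [Bk_of_le κ a b hab, Bk_of_le κ c d hcd]
    calc |∫ ω, g' a ω * g' b ω * g' c ω * g' d ω ∂P|
        ≤ M * Real.exp (-κ * (b - a)) * Real.exp (-κ * (d - c)) := h
      _ = M * (Real.exp (-κ * (b - a)) * Real.exp (-κ * (d - c))) := by ring
  -- u₁ minimal, pairs sorted
  have key1 : ∀ u₁ u₂ u₃ u₄ : ℝ,
      u₁ ∈ Set.Icc S₀ S₁ → u₂ ∈ Set.Icc S₀ S₁ → u₃ ∈ Set.Icc S₀ S₁ → u₄ ∈ Set.Icc S₀ S₁ →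
      u₁ ≤ u₂ → u₃ ≤ u₄ → u₁ ≤ u₃ →
      |∫ ω, g' u₁ ω * g' u₂ ω * g' u₃ ω * g' u₄ ω ∂P|
        ≤ M * (Bk κ u₁ u₂ * Bk κ u₃ u₄ + Bk κ u₁ u₃ * Bk κ u₂ u₄ + Bk κ u₁ u₄ * Bk κ u₂ u₃) := by
    intro u₁ u₂ u₃ u₄ h1 h2 h3 h4 h12 h34 h13
    have m1 := mul_pos hM (mul_pos (Bk_pos κ u₁ u₂) (Bk_pos κ u₃ u₄))
    have m2 := mul_pos hM (mul_pos (Bk_pos κ u₁ u₃) (Bk_pos κ u₂ u₄))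
    have m3 := mul_pos hM (mul_pos (Bk_pos κ u₁ u₄) (Bk_pos κ u₂ u₃))
    rcases le_total u₂ u₃ with h23 | h32
    · have t := S4 u₁ u₂ u₃ u₄ h1 h4 h12 h23 h34
      nlinarith
    · rcases le_total u₂ u₄ with h24 | h42
      · have t := S4 u₁ u₃ u₂ u₄ h1 h4 h13 h32 h24
        have e : (∫ ω, g' u₁ ω * g' u₃ ω * g' u₂ ω * g' u₄ ω ∂P)
            = ∫ ω, g' u₁ ω * g' u₂ ω * g' u₃ ω * g' u₄ ω ∂P :=
          integral_congr_ae (Filter.Eventually.of_forall fun ω => by ring)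
        rw [e] at t
        nlinarith
      · have t := S4 u₁ u₃ u₄ u₂ h1 h2 h13 h34 h42
        have e : (∫ ω, g' u₁ ω * g' u₃ ω * g' u₄ ω * g' u₂ ω ∂P)
            = ∫ ω, g' u₁ ω * g' u₂ ω * g' u₃ ω * g' u₄ ω ∂P :=
          integral_congr_ae (Filter.Eventually.of_forall fun ω => by ring)
        rw [e, Bk_symm κ u₄ u₂] at t
        nlinarith
  -- drop u₁ ≤ u₃
  have key2 : ∀ u₁ u₂ u₃ u₄ : ℝ,
      u₁ ∈ Set.Icc S₀ S₁ → u₂ ∈ Set.Icc S₀ S₁ → u₃ ∈ Set.Icc S₀ S₁ → u₄ ∈ Set.Icc S₀ S₁ →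
      u₁ ≤ u₂ → u₃ ≤ u₄ →
      |∫ ω, g' u₁ ω * g' u₂ ω * g' u₃ ω * g' u₄ ω ∂P|
        ≤ M * (Bk κ u₁ u₂ * Bk κ u₃ u₄ + Bk κ u₁ u₃ * Bk κ u₂ u₄ + Bk κ u₁ u₄ * Bk κ u₂ u₃) := by
    intro u₁ u₂ u₃ u₄ h1 h2 h3 h4 h12 h34
    rcases le_total u₁ u₃ with h13 | h31
    · exact key1 u₁ u₂ u₃ u₄ h1 h2 h3 h4 h12 h34 h13
    · have t := key1 u₃ u₄ u₁ u₂ h3 h4 h1 h2 h34 h12 h31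
      have e : (∫ ω, g' u₃ ω * g' u₄ ω * g' u₁ ω * g' u₂ ω ∂P)
          = ∫ ω, g' u₁ ω * g' u₂ ω * g' u₃ ω * g' u₄ ω ∂P :=
        integral_congr_ae (Filter.Eventually.of_forall fun ω => by ring)
      rw [e] at t
      refine t.trans (le_of_eq ?_)
      rw [Bk_symm κ u₃ u₁, Bk_symm κ u₄ u₂, Bk_symm κ u₃ u₂, Bk_symm κ u₄ u₁]
      ring
  -- drop u₃ ≤ u₄
  have key3 : ∀ u₁ u₂ u₃ u₄ : ℝ,
      u₁ ∈ Set.Icc S₀ S₁ → u₂ ∈ Set.Icc S₀ S₁ → u₃ ∈ Set.Icc S₀ S₁ → u₄ ∈ Set.Icc S₀ S₁ →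
      u₁ ≤ u₂ →
      |∫ ω, g' u₁ ω * g' u₂ ω * g' u₃ ω * g' u₄ ω ∂P|
        ≤ M * (Bk κ u₁ u₂ * Bk κ u₃ u₄ + Bk κ u₁ u₃ * Bk κ u₂ u₄ + Bk κ u₁ u₄ * Bk κ u₂ u₃) := by
    intro u₁ u₂ u₃ u₄ h1 h2 h3 h4 h12
    rcases le_total u₃ u₄ with h34 | h43
    · exact key2 u₁ u₂ u₃ u₄ h1 h2 h3 h4 h12 h34
    · have t := key2 u₁ u₂ u₄ u₃ h1 h2 h4 h3 h12 h43
      have e : (∫ ω, g' u₁ ω * g' u₂ ω * g' u₄ ω * g' u₃ ω ∂P)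
          = ∫ ω, g' u₁ ω * g' u₂ ω * g' u₃ ω * g' u₄ ω ∂P :=
        integral_congr_ae (Filter.Eventually.of_forall fun ω => by ring)
      rw [e] at t
      refine t.trans (le_of_eq ?_)
      rw [Bk_symm κ u₄ u₃, Bk_symm κ u₂ u₄, Bk_symm κ u₂ u₃]
      ring
  -- drop u₁ ≤ u₂
  have key4 : ∀ u₁ u₂ u₃ u₄ : ℝ,
      u₁ ∈ Set.Icc S₀ S₁ → u₂ ∈ Set.Icc S₀ S₁ → u₃ ∈ Set.Icc S₀ S₁ → u₄ ∈ Set.Icc S₀ S₁ →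
      |∫ ω, g' u₁ ω * g' u₂ ω * g' u₃ ω * g' u₄ ω ∂P|
        ≤ M * (Bk κ u₁ u₂ * Bk κ u₃ u₄ + Bk κ u₁ u₃ * Bk κ u₂ u₄ + Bk κ u₁ u₄ * Bk κ u₂ u₃) := by
    intro u₁ u₂ u₃ u₄ h1 h2 h3 h4
    rcases le_total u₁ u₂ with h12 | h21
    · exact key3 u₁ u₂ u₃ u₄ h1 h2 h3 h4 h12
    · have t := key3 u₂ u₁ u₃ u₄ h2 h1 h3 h4 h21
      have e : (∫ ω, g' u₂ ω * g' u₁ ω * g' u₃ ω * g' u₄ ω ∂P)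
          = ∫ ω, g' u₁ ω * g' u₂ ω * g' u₃ ω * g' u₄ ω ∂P :=
        integral_congr_ae (Filter.Eventually.of_forall fun ω => by ring)
      rw [e] at t
      refine t.trans (le_of_eq ?_)
      rw [Bk_symm κ u₂ u₁, Bk_symm κ u₂ u₃, Bk_symm κ u₂ u₄]
      ring
  -- general case: handle coordinates outside [S₀, S₁]
  intro u₁ u₂ u₃ u₄
  by_cases h1 : u₁ ∈ Set.Icc S₀ S₁
  · by_cases h2 : u₂ ∈ Set.Icc S₀ S₁
    · by_cases h3 : u₃ ∈ Set.Icc S₀ S₁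
      · by_cases h4 : u₄ ∈ Set.Icc S₀ S₁
        · exact key4 u₁ u₂ u₃ u₄ h1 h2 h3 h4
        · have e : (∫ ω, g' u₁ ω * g' u₂ ω * g' u₃ ω * g' u₄ ω ∂P) = 0 := by
            simp [hzero u₄ h4]
          rw [e, abs_zero]; exact hRHS u₁ u₂ u₃ u₄
      · have e : (∫ ω, g' u₁ ω * g' u₂ ω * g' u₃ ω * g' u₄ ω ∂P) = 0 := by
          simp [hzero u₃ h3]
        rw [e, abs_zero]; exact hRHS u₁ u₂ u₃ u₄
    · have e : (∫ ω, g' u₁ ω * g' u₂ ω * g' u₃ ω * g' u₄ ω ∂P) = 0 := by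
        simp [hzero u₂ h2]
      rw [e, abs_zero]; exact hRHS u₁ u₂ u₃ u₄
  · have e : (∫ ω, g' u₁ ω * g' u₂ ω * g' u₃ ω * g' u₄ ω ∂P) = 0 := by
      simp [hzero u₁ h1]
    rw [e, abs_zero]; exact hRHS u₁ u₂ u₃ u₄


set_option maxHeartbeats 2000000 in
/-- A fourth-moment bound from exponentially decaying four-point correlations:
if `|E[g(r₁)g(r₂)g(r₃)g(r₄)]| ≤ M e^{−κ(r₂−r₁)} e^{−κ(r₄−r₃)}` for ordered times in
`[S₀, S₁]`, then `E[(∫_{S₀}^{S₁} g(u) du)⁴] ≤ 24 M κ^{−2} (S₁−S₀)²`. -/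
theorem fourth_moment_bound {Ω : Type*} [MeasurableSpace Ω]
    (P : Measure Ω) [IsProbabilityMeasure P]
    (S₀ S₁ : ℝ) (hS : S₀ < S₁)
    (g : ℝ → Ω → ℝ) (hgmeas : Measurable (Function.uncurry g))
    (K : ℝ) (hgbdd : ∀ u ∈ Set.Icc S₀ S₁, ∀ ω, |g u ω| ≤ K)
    (M κ : ℝ) (hM : 0 < M) (hκ : 0 < κ)
    (hcorr : ∀ r₁ r₂ r₃ r₄ : ℝ,
      S₀ ≤ r₁ → r₁ ≤ r₂ → r₂ ≤ r₃ → r₃ ≤ r₄ → r₄ ≤ S₁ →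
      |∫ ω, g r₁ ω * g r₂ ω * g r₃ ω * g r₄ ω ∂P|
        ≤ M * Real.exp (-κ * (r₂ - r₁)) * Real.exp (-κ * (r₄ - r₃))) :
    (∫ ω, (∫ u in S₀..S₁, g u ω) ^ 4 ∂P)
      ≤ 24 * M * (κ ^ 2)⁻¹ * (S₁ - S₀) ^ 2 := by
  classical
  -- the truncated kernel
  set g' : ℝ → Ω → ℝ := fun u ω => if u ∈ Set.Icc S₀ S₁ then g u ω else 0 with hg'def
  set K' : ℝ := |K| with hK'def
  have hK'0 : 0 ≤ K' := abs_nonneg K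
  have hg'eq : ∀ u ∈ Set.Icc S₀ S₁, ∀ ω, g' u ω = g u ω := by
    intro u hu ω
    show (if u ∈ Set.Icc S₀ S₁ then g u ω else 0) = g u ω
    exact if_pos hu
  have hg'zero : ∀ u, u ∉ Set.Icc S₀ S₁ → ∀ ω, g' u ω = 0 := by
    intro u hu ω
    show (if u ∈ Set.Icc S₀ S₁ then g u ω else 0) = 0
    exact if_neg hu
  have hg'bdd : ∀ u ω, |g' u ω| ≤ K' := by
    intro u ω
    by_cases hu : u ∈ Set.Icc S₀ S₁
    · rw [hg'eq u hu ω]; exact (hgbdd u hu ω).trans (le_abs_self K)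
    · rw [hg'zero u hu ω]; simpa using hK'0
  have hg'meas : Measurable (Function.uncurry g') := by
    have : Function.uncurry g' = fun p : ℝ × Ω =>
        if p.1 ∈ Set.Icc S₀ S₁ then Function.uncurry g p else 0 := by
      funext p; rfl
    rw [this]
    exact Measurable.ite (measurable_fst measurableSet_Icc) hgmeas measurable_const
  -- correlation bound for the truncated kernel
  have hcorr' : ∀ r₁ r₂ r₃ r₄ : ℝ, S₀ ≤ r₁ → r₁ ≤ r₂ → r₂ ≤ r₃ → r₃ ≤ r₄ → r₄ ≤ S₁ →
      |∫ ω, g' r₁ ω * g' r₂ ω * g' r₃ ω * g' r₄ ω ∂P|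
        ≤ M * Real.exp (-κ * (r₂ - r₁)) * Real.exp (-κ * (r₄ - r₃)) := by
    intro r₁ r₂ r₃ r₄ h0 h12 h23 h34 h4S
    have m1 : r₁ ∈ Set.Icc S₀ S₁ := ⟨h0, h12.trans (h23.trans (h34.trans h4S))⟩
    have m2 : r₂ ∈ Set.Icc S₀ S₁ := ⟨h0.trans h12, h23.trans (h34.trans h4S)⟩
    have m3 : r₃ ∈ Set.Icc S₀ S₁ := ⟨h0.trans (h12.trans h23), h34.trans h4S⟩
    have m4 : r₄ ∈ Set.Icc S₀ S₁ := ⟨h0.trans (h12.trans (h23.trans h34)), h4S⟩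
    have e : (∫ ω, g' r₁ ω * g' r₂ ω * g' r₃ ω * g' r₄ ω ∂P)
        = ∫ ω, g r₁ ω * g r₂ ω * g r₃ ω * g r₄ ω ∂P := by
      apply MeasureTheory.integral_congr_ae
      filter_upwards with ω
      rw [hg'eq r₁ m1 ω, hg'eq r₂ m2 ω, hg'eq r₃ m3 ω, hg'eq r₄ m4 ω]
    rw [e]
    exact hcorr r₁ r₂ r₃ r₄ h0 h12 h23 h34 h4S
  have keyB := aux_key P S₀ S₁ g' M κ hM hg'zero hcorr'
  -- the restricted measure and products
  set ν : Measure ℝ := volume.restrict (Set.Ioc S₀ S₁) with hν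
  haveI : IsFiniteMeasure ν := by
    constructor
    rw [hν, Measure.restrict_apply_univ, Real.volume_Ioc]
    exact ENNReal.ofReal_lt_top
  set μ2 : Measure (ℝ × ℝ) := ν.prod ν with hμ2
  set μ4 : Measure ((ℝ × ℝ) × ℝ × ℝ) := μ2.prod μ2 with hμ4
  set Φ : ((ℝ × ℝ) × ℝ × ℝ) → Ω → ℝ := fun z ω =>
    (g' z.1.1 ω * g' z.1.2 ω) * (g' z.2.1 ω * g' z.2.2 ω) with hΦ
  -- Step A: pointwise identity for the fourth power
  have stepA : ∀ ω, (∫ u in S₀..S₁, g u ω) ^ 4 = ∫ z, Φ z ω ∂μ4 := by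
    intro ω
    have hgg' : (∫ u in S₀..S₁, g u ω) = ∫ u in S₀..S₁, g' u ω := by
      apply intervalIntegral.integral_congr
      intro u hu
      rw [Set.uIcc_of_le hS.le] at hu
      exact (hg'eq u hu ω).symm
    rw [hgg', intervalIntegral.integral_of_le hS.le]
    have h1 : (∫ q : ℝ × ℝ, g' q.1 ω * g' q.2 ω ∂μ2)
        = (∫ u, g' u ω ∂ν) * ∫ u, g' u ω ∂ν :=
      integral_prod_mul (fun u => g' u ω) (fun u => g' u ω)
    have h2 : (∫ z, Φ z ω ∂μ4)
        = (∫ q : ℝ × ℝ, g' q.1 ω * g' q.2 ω ∂μ2) * ∫ q : ℝ × ℝ, g' q.1 ω * g' q.2 ω ∂μ2 :=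
      integral_prod_mul (fun q : ℝ × ℝ => g' q.1 ω * g' q.2 ω)
        (fun q : ℝ × ℝ => g' q.1 ω * g' q.2 ω)
    rw [h2, h1]
    ring
  -- joint measurability of Φ
  have mΦ : Measurable fun q : (((ℝ × ℝ) × ℝ × ℝ) × Ω) => Φ q.1 q.2 := by
    have m : ∀ h : (((ℝ × ℝ) × ℝ × ℝ) × Ω) → ℝ, Measurable h →
        Measurable fun q : (((ℝ × ℝ) × ℝ × ℝ) × Ω) => g' (h q) q.2 := by
      intro h hh
      exact hg'meas.comp (hh.prodMk measurable_snd)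
    exact ((m _ measurable_fst.fst.fst).mul (m _ measurable_fst.fst.snd)).mul
      ((m _ measurable_fst.snd.fst).mul (m _ measurable_fst.snd.snd))
  have bΦ : ∀ z ω, ‖Φ z ω‖ ≤ K' * K' * (K' * K') := by
    intro z ω
    show |(g' z.1.1 ω * g' z.1.2 ω) * (g' z.2.1 ω * g' z.2.2 ω)| ≤ _
    rw [abs_mul, abs_mul, abs_mul]
    exact mul_le_mul (mul_le_mul (hg'bdd _ _) (hg'bdd _ _) (abs_nonneg _) hK'0)
      (mul_le_mul (hg'bdd _ _) (hg'bdd _ _) (abs_nonneg _) hK'0)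
      (mul_nonneg (abs_nonneg _) (abs_nonneg _)) (mul_nonneg hK'0 hK'0)
  -- Fubini swap
  have hswap : (∫ ω, ∫ z, Φ z ω ∂μ4 ∂P) = ∫ z, ∫ ω, Φ z ω ∂P ∂μ4 := by
    apply integral_integral_swap
    have mm : Measurable (Function.uncurry fun ω z => Φ z ω) :=
      mΦ.comp measurable_swap
    apply (integrable_const (K' * K' * (K' * K'))).mono' mm.aestronglyMeasurable
    filter_upwards with p
    exact bΦ p.2 p.1
  -- the expectation function and its dominating function
  set F : ((ℝ × ℝ) × ℝ × ℝ) → ℝ := fun z => ∫ ω, Φ z ω ∂P with hF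
  set f₁ : ((ℝ × ℝ) × ℝ × ℝ) → ℝ := fun z => Bk κ z.1.1 z.1.2 * Bk κ z.2.1 z.2.2 with hf₁
  set f₂ : ((ℝ × ℝ) × ℝ × ℝ) → ℝ := fun z => Bk κ z.1.1 z.2.1 * Bk κ z.1.2 z.2.2 with hf₂
  set f₃ : ((ℝ × ℝ) × ℝ × ℝ) → ℝ := fun z => Bk κ z.1.1 z.2.2 * Bk κ z.1.2 z.2.1 with hf₃
  set W : ((ℝ × ℝ) × ℝ × ℝ) → ℝ := fun z => M * (f₁ z + f₂ z + f₃ z) with hWdef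
  have hFW : ∀ z, |F z| ≤ W z := by
    intro z
    have e : F z = ∫ ω, g' z.1.1 ω * g' z.1.2 ω * g' z.2.1 ω * g' z.2.2 ω ∂P :=
      MeasureTheory.integral_congr_ae (Filter.Eventually.of_forall fun ω => by
        show (g' z.1.1 ω * g' z.1.2 ω) * (g' z.2.1 ω * g' z.2.2 ω) = _
        ring)
    rw [e]
    exact keyB z.1.1 z.1.2 z.2.1 z.2.2
  -- integrability of F
  have hFmeas : StronglyMeasurable F := mΦ.stronglyMeasurable.integral_prod_right'
  have hFbd : ∀ z, ‖F z‖ ≤ K' * K' * (K' * K') := by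
    intro z
    have h := norm_integral_le_of_norm_le_const (μ := P) (f := fun ω => Φ z ω)
      (C := K' * K' * (K' * K')) (Filter.Eventually.of_forall fun ω => bΦ z ω)
    simpa [measure_univ] using h
  have hFint : Integrable F μ4 :=
    (integrable_const _).mono' hFmeas.aestronglyMeasurable (Filter.Eventually.of_forall hFbd)
  -- continuity and bounds for the Bk integrands
  have hBc : Continuous fun p : ℝ × ℝ => Bk κ p.1 p.2 := by
    unfold Bk; fun_prop
  have hBprod : ∀ a b c d : ℝ, ‖Bk κ a b * Bk κ c d‖ ≤ 1 := by
    intro a b c d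
    rw [Real.norm_eq_abs, abs_of_pos (mul_pos (Bk_pos κ a b) (Bk_pos κ c d))]
    have h1 := Bk_le_one κ a b hκ.le
    have h2 := Bk_le_one κ c d hκ.le
    nlinarith [Bk_pos κ a b, Bk_pos κ c d]
  have hintOf : ∀ f : ((ℝ × ℝ) × ℝ × ℝ) → ℝ, Continuous f → (∀ z, ‖f z‖ ≤ 1) →
      Integrable f μ4 := fun f hc hb =>
    (integrable_const 1).mono' hc.aestronglyMeasurable (Filter.Eventually.of_forall hb)
  have hint1 : Integrable f₁ μ4 := by
    apply hintOf
    · rw [hf₁]; unfold Bk; fun_prop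
    · intro z; exact hBprod _ _ _ _
  have hint2 : Integrable f₂ μ4 := by
    apply hintOf
    · rw [hf₂]; unfold Bk; fun_prop
    · intro z; exact hBprod _ _ _ _
  have hint3 : Integrable f₃ μ4 := by
    apply hintOf
    · rw [hf₃]; unfold Bk; fun_prop
    · intro z; exact hBprod _ _ _ _
  have hint2d : Integrable (fun q : ℝ × ℝ => Bk κ q.1 q.2) μ2 :=
    (integrable_const 1).mono' hBc.aestronglyMeasurable
      (Filter.Eventually.of_forall fun q => by
        rw [Real.norm_eq_abs, abs_of_pos (Bk_pos κ q.1 q.2)]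
        exact Bk_le_one κ q.1 q.2 hκ.le)
  -- the inner 1D integral
  set Ib : ℝ → ℝ := fun a => ∫ b, Bk κ a b ∂ν with hIb
  set J : ℝ := ∫ a, Ib a ∂ν with hJdef
  have hν1 : (ν Set.univ).toReal = S₁ - S₀ := by
    rw [hν, Measure.restrict_apply_univ, Real.volume_Ioc,
      ENNReal.toReal_ofReal (by linarith)]
  have hIbm : StronglyMeasurable Ib :=
    (hBc.measurable.stronglyMeasurable).integral_prod_right'
  have hIbb : ∀ a, ‖Ib a‖ ≤ S₁ - S₀ := by
    intro a
    have h := norm_integral_le_of_norm_le_const (μ := ν) (f := fun b => Bk κ a b) (C := 1)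
      (Filter.Eventually.of_forall fun b => by
        rw [Real.norm_eq_abs, abs_of_pos (Bk_pos κ a b)]
        exact Bk_le_one κ a b hκ.le)
    rw [measureReal_def, hν1] at h
    simpa using h
  have hIbint : Integrable Ib ν :=
    (integrable_const (S₁ - S₀)).mono' hIbm.aestronglyMeasurable
      (Filter.Eventually.of_forall hIbb)
  have hIb2κ : ∀ᵐ a ∂ν, Ib a ≤ 2/κ := by
    filter_upwards [ae_restrict_mem measurableSet_Ioc] with a ha
    exact aux_exp_integral κ S₀ S₁ a hκ ha
  have hJle : J ≤ (S₁ - S₀) * (2/κ) := by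
    calc J ≤ ∫ _, (2/κ) ∂ν := integral_mono_ae hIbint (integrable_const _) hIb2κ
      _ = (S₁ - S₀) * (2/κ) := by rw [MeasureTheory.integral_const, smul_eq_mul, measureReal_def, hν1]
  have hJ0 : 0 ≤ J :=
    integral_nonneg fun a => integral_nonneg fun b => (Bk_pos κ a b).le
  -- the three pairings integrals
  have hμ2J : (∫ q : ℝ × ℝ, Bk κ q.1 q.2 ∂μ2) = J := by
    rw [hμ2]
    exact integral_prod _ hint2d
  have hT1 : (∫ z, f₁ z ∂μ4) = J * J := by
    have h2 : (∫ z, f₁ z ∂μ4)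
        = (∫ q : ℝ × ℝ, Bk κ q.1 q.2 ∂μ2) * ∫ q : ℝ × ℝ, Bk κ q.1 q.2 ∂μ2 :=
      integral_prod_mul (fun q : ℝ × ℝ => Bk κ q.1 q.2) (fun q : ℝ × ℝ => Bk κ q.1 q.2)
    rw [h2, hμ2J]
  have hIbmul : (∫ x : ℝ × ℝ, Ib x.1 * Ib x.2 ∂μ2) = J * J := by
    rw [hμ2]
    exact integral_prod_mul Ib Ib
  have hT2 : (∫ z, f₂ z ∂μ4) = J * J := by
    have h0 : (∫ z, f₂ z ∂μ4)
        = ∫ x : ℝ × ℝ, (∫ y : ℝ × ℝ, Bk κ x.1 y.1 * Bk κ x.2 y.2 ∂μ2) ∂μ2 := by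
      rw [hμ4]
      exact integral_prod _ hint2
    have h1 : ∀ x : ℝ × ℝ, (∫ y : ℝ × ℝ, Bk κ x.1 y.1 * Bk κ x.2 y.2 ∂μ2)
        = Ib x.1 * Ib x.2 := by
      intro x
      rw [hμ2]
      exact integral_prod_mul (fun b => Bk κ x.1 b) (fun b => Bk κ x.2 b)
    rw [h0, MeasureTheory.integral_congr_ae (Filter.Eventually.of_forall h1), hIbmul]
  have hT3 : (∫ z, f₃ z ∂μ4) = J * J := by
    have h0 : (∫ z, f₃ z ∂μ4)
        = ∫ x : ℝ × ℝ, (∫ y : ℝ × ℝ, Bk κ x.1 y.2 * Bk κ x.2 y.1 ∂μ2) ∂μ2 := by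
      rw [hμ4]
      exact integral_prod _ hint3
    have h1 : ∀ x : ℝ × ℝ, (∫ y : ℝ × ℝ, Bk κ x.1 y.2 * Bk κ x.2 y.1 ∂μ2)
        = Ib x.2 * Ib x.1 := by
      intro x
      have e : (∫ y : ℝ × ℝ, Bk κ x.1 y.2 * Bk κ x.2 y.1 ∂μ2)
          = ∫ y : ℝ × ℝ, Bk κ x.2 y.1 * Bk κ x.1 y.2 ∂μ2 :=
        MeasureTheory.integral_congr_ae (Filter.Eventually.of_forall fun y => by ring)
      rw [e, hμ2]
      exact integral_prod_mul (fun b => Bk κ x.2 b) (fun b => Bk κ x.1 b)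
    have h2 : (∫ x : ℝ × ℝ, Ib x.2 * Ib x.1 ∂μ2) = ∫ x : ℝ × ℝ, Ib x.1 * Ib x.2 ∂μ2 :=
      MeasureTheory.integral_congr_ae (Filter.Eventually.of_forall fun x => by ring)
    rw [h0, MeasureTheory.integral_congr_ae (Filter.Eventually.of_forall h1), h2, hIbmul]
  -- integral of W
  have hWint : Integrable W μ4 := ((hint1.add hint2).add hint3).const_mul M
  have hWval : (∫ z, W z ∂μ4)
      = M * ((∫ z, f₁ z ∂μ4) + (∫ z, f₂ z ∂μ4) + ∫ z, f₃ z ∂μ4) := by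
    have h12 : Integrable (fun z => f₁ z + f₂ z) μ4 := hint1.add hint2
    have e1 : (∫ z, (f₁ z + f₂ z) + f₃ z ∂μ4)
        = (∫ z, f₁ z + f₂ z ∂μ4) + ∫ z, f₃ z ∂μ4 := integral_add h12 hint3
    have e2 : (∫ z, f₁ z + f₂ z ∂μ4) = (∫ z, f₁ z ∂μ4) + ∫ z, f₂ z ∂μ4 :=
      integral_add hint1 hint2
    calc (∫ z, W z ∂μ4) = M * ∫ z, f₁ z + f₂ z + f₃ z ∂μ4 :=
          MeasureTheory.integral_const_mul M _
      _ = M * ((∫ z, f₁ z ∂μ4) + (∫ z, f₂ z ∂μ4) + ∫ z, f₃ z ∂μ4) := by rw [e1, e2]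
  -- final assembly
  calc (∫ ω, (∫ u in S₀..S₁, g u ω) ^ 4 ∂P)
      = ∫ ω, (∫ z, Φ z ω ∂μ4) ∂P :=
        MeasureTheory.integral_congr_ae (Filter.Eventually.of_forall stepA)
    _ = ∫ z, F z ∂μ4 := hswap
    _ ≤ ∫ z, W z ∂μ4 := integral_mono hFint hWint
        (fun z => (le_abs_self (F z)).trans (hFW z))
    _ = M * ((∫ z, f₁ z ∂μ4) + (∫ z, f₂ z ∂μ4) + ∫ z, f₃ z ∂μ4) := hWval
    _ = M * (J * J + J * J + J * J) := by rw [hT1, hT2, hT3]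
    _ ≤ 24 * M * (κ ^ 2)⁻¹ * (S₁ - S₀) ^ 2 := by
        have hC0 : 0 ≤ (S₁ - S₀) * (2/κ) :=
          mul_nonneg (by linarith) (by positivity)
        have hsq : J * J ≤ ((S₁ - S₀) * (2/κ)) * ((S₁ - S₀) * (2/κ)) :=
          mul_le_mul hJle hJle hJ0 hC0
        have e2 : (0:ℝ) ≤ 12 * M * (S₁ - S₀)^2 / κ^2 := by positivity
        have e1 : 24 * M * (κ ^ 2)⁻¹ * (S₁ - S₀) ^ 2
            = M * (((S₁ - S₀) * (2/κ)) * ((S₁ - S₀) * (2/κ))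
              + ((S₁ - S₀) * (2/κ)) * ((S₁ - S₀) * (2/κ))
              + ((S₁ - S₀) * (2/κ)) * ((S₁ - S₀) * (2/κ)))
              + 12 * M * (S₁ - S₀)^2 / κ^2 := by
          field_simp
          ring
        rw [e1]
        nlinarith [hsq, hM]
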